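/- Let I₁ be the linear interpolation operator on nodes x_{j-1}, x_j with spacing h, and let x̄_j = x_j - Δt with 0 < Δt ≤ h. For sequences ρ_j = u_j - U_j (u smooth grid values, U arbitrary), the interpolated error satisfies |I₁(ρ)(x̄_j) + (f - I₁f)(x̄_j)| ≤ max_j |ρ_j| + (M/2)·Δt·h, where f is the underlying C² function with grid values u_j and |f''| ≤ M. In particular |f(x̄_j) - I₁(U)(x̄_j)| ≤ max_j |ρ_j| + (M/2)·h·Δt. -/

import Mathlib

open Finset

theorem interp_err_aux
    (f : ℝ → ℝ) (hf : ContDiff ℝ 2 f) (M2 : ℝ)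
    (hM2 : ∀ ξ : ℝ, |iteratedDeriv 2 f ξ| ≤ M2)
    (a b x : ℝ) (hab : a < b) (hax : a ≤ x) (hxb : x ≤ b) :
    |f x - (f a * (b - x) + f b * (x - a)) / (b - a)|
      ≤ M2 / 2 * ((x - a) * (b - x)) := by
  have hba : b - a ≠ 0 := sub_ne_zero.2 hab.ne'
  have hM2nn : 0 ≤ M2 := le_trans (abs_nonneg _) (hM2 0)
  rcases eq_or_lt_of_le hax with rfl | hax
  · have : f a - (f a * (b - a) + f b * (a - a)) / (b - a) = 0 := by
      field_simp
      ring
    rw [this]; simp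
  rcases eq_or_lt_of_le hxb with rfl | hxb
  · have : f x - (f a * (x - x) + f x * (x - a)) / (x - a) = 0 := by
      field_simp
      ring
    rw [this]; simp
  -- now a < x < b
  set E : ℝ := f x - (f a * (b - x) + f b * (x - a)) / (b - a) with hE
  set W : ℝ := (x - a) * (b - x) with hW
  have hWpos : 0 < W := mul_pos (by linarith) (by linarith)
  -- derivatives of f
  have hf1 : Differentiable ℝ f := hf.differentiable (by norm_num)
  have hfd : ContDiff ℝ 1 (deriv f) := by
    have h2 : ContDiff ℝ ((1 : WithTop ℕ∞) + 1) f := by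
      rw [show ((1 : WithTop ℕ∞) + 1) = 2 from by norm_num]; exact hf
    exact (contDiff_succ_iff_deriv.mp h2).2.2
  have hf2 : Differentiable ℝ (deriv f) := hfd.differentiable (by norm_num)
  have hit2 : iteratedDeriv 2 f = deriv (deriv f) := by
    rw [show (2:ℕ) = 1 + 1 from rfl, iteratedDeriv_succ, iteratedDeriv_one]
  set G : ℝ → ℝ := fun t =>
    (f t - (f a * (b - t) + f b * (t - a)) / (b - a)) * W - E * ((t - a) * (b - t)) with hG
  set G' : ℝ → ℝ := fun t =>
    (deriv f t - (f b - f a) / (b - a)) * W - E * (a + b - 2 * t) with hG'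
  have hGd : ∀ t : ℝ, HasDerivAt G (G' t) t := by
    intro t
    have h1 : HasDerivAt (fun t : ℝ => f a * (b - t) + f b * (t - a)) (f b - f a) t := by
      have := (((hasDerivAt_id t).const_sub b).const_mul (f a)).add
        (((hasDerivAt_id t).sub_const a).const_mul (f b))
      exact this.congr_deriv (by ring)
    have h2 : HasDerivAt (fun t : ℝ => (t - a) * (b - t)) (a + b - 2 * t) t := by
      have := ((hasDerivAt_id t).sub_const a).mul ((hasDerivAt_id t).const_sub b)
      exact this.congr_deriv (by simp only [id_eq]; ring)
    exact (((hf1 t).hasDerivAt.sub (h1.div_const (b - a))).mul_const W).sub (h2.const_mul E)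
  have hG'd : ∀ t : ℝ, HasDerivAt G' (deriv (deriv f) t * W + 2 * E) t := by
    intro t
    have := (((hf2 t).hasDerivAt.sub_const ((f b - f a) / (b - a))).mul_const W).sub
      ((((hasDerivAt_id t).const_mul 2).const_sub (a + b)).const_mul E)
    exact this.congr_deriv (by ring)
  have hGcont : ContinuousOn G (Set.Icc a x) ∧ ContinuousOn G (Set.Icc x b) := by
    constructor <;> exact (continuous_iff_continuousAt.2 fun t => (hGd t).continuousAt).continuousOn
  have hGa : G a = 0 := by simp only [hG]; field_simp; ring
  have hGx : G x = 0 := by simp only [hG, ← hE, ← hW]; ring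
  have hGb : G b = 0 := by simp only [hG]; field_simp; ring
  obtain ⟨c₁, hc₁, hc₁0⟩ := exists_hasDerivAt_eq_zero hax hGcont.1 (hGa.trans hGx.symm)
    (fun t _ => hGd t)
  obtain ⟨c₂, hc₂, hc₂0⟩ := exists_hasDerivAt_eq_zero hxb hGcont.2 (hGx.trans hGb.symm)
    (fun t _ => hGd t)
  have hc12 : c₁ < c₂ := lt_trans hc₁.2 hc₂.1
  have hG'cont : ContinuousOn G' (Set.Icc c₁ c₂) :=
    (continuous_iff_continuousAt.2 fun t => (hG'd t).continuousAt).continuousOn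
  obtain ⟨ξ, _, hξ0⟩ := exists_hasDerivAt_eq_zero hc12 hG'cont (hc₁0.trans hc₂0.symm)
    (fun t _ => hG'd t)
  have hEeq : E = -(deriv (deriv f) ξ * W) / 2 := by linear_combination hξ0 / 2
  have : |E| ≤ M2 / 2 * W := by
    rw [hEeq, abs_div, abs_neg, abs_mul]
    have h1 : |deriv (deriv f) ξ| ≤ M2 := by rw [← hit2]; exact hM2 ξ
    have h2 : |W| = W := abs_of_pos hWpos
    rw [h2, abs_of_pos (by norm_num : (0:ℝ) < 2)]
    nlinarith [hWpos.le]
  exact this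

/-- Interpolated error bound used in the convergence proof: with grid
`x_j = j h`, `u_j = f(x_j)` for a `C²` function `f` with `|f''| ≤ M2`,
arbitrary values `U_j`, errors `ρ_j = u_j - U_j`, and the back-tracked point
`x̄_j = x_j - Δt ∈ [x_{j-1}, x_j]`, the linearly interpolated value satisfies
`|f(x̄_j) - I₁(U)(x̄_j)| ≤ max_j |ρ_j| + (M2/2) h Δt`. -/
theorem interpolated_error_bound
    (f : ℝ → ℝ) (hf : ContDiff ℝ 2 f) (M2 : ℝ)
    (hM2 : ∀ ξ : ℝ, |iteratedDeriv 2 f ξ| ≤ M2)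
    (h Δt : ℝ) (hh : 0 < h) (hΔt : 0 < Δt) (hΔth : Δt ≤ h)
    (Mgrid : ℕ) (hMgrid : 0 < Mgrid)
    (U : ℕ → ℝ)
    (j : ℕ) (hj : 1 ≤ j) (hjM : j ≤ Mgrid) :
    |f ((j : ℝ) * h - Δt)
        - (U (j - 1) * ((j : ℝ) * h - ((j : ℝ) * h - Δt)) / h
           + U j * (((j : ℝ) * h - Δt) - ((j : ℝ) - 1) * h) / h)|
      ≤ (Finset.range (Mgrid + 1)).sup' (by simp)
          (fun i => |f ((i : ℝ) * h) - U i|)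
        + M2 / 2 * h * Δt := by
  have hba : h ≠ 0 := ne_of_gt hh
  set a : ℝ := ((j : ℝ) - 1) * h with ha
  set b : ℝ := (j : ℝ) * h with hb
  set x : ℝ := b - Δt with hx
  have hab : a < b := by rw [ha, hb]; nlinarith
  have hax : a ≤ x := by rw [ha, hx, hb]; nlinarith
  have hxb : x ≤ b := by rw [hx]; linarith
  have key := interp_err_aux f hf M2 hM2 a b x hab hax hxb
  have hM2nn : 0 ≤ M2 := le_trans (abs_nonneg _) (hM2 0)
  have hcast : ((j - 1 : ℕ) : ℝ) = (j : ℝ) - 1 := by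
    have := Nat.cast_sub (R := ℝ) hj
    simpa using this
  have hmem1 : j - 1 ∈ Finset.range (Mgrid + 1) := Finset.mem_range.2 (by omega)
  have hmem2 : j ∈ Finset.range (Mgrid + 1) := Finset.mem_range.2 (by omega)
  set S := (Finset.range (Mgrid + 1)).sup' (by simp) (fun i => |f ((i : ℝ) * h) - U i|)
    with hS
  have hρa : |f a - U (j - 1)| ≤ S := by
    have := Finset.le_sup' (fun i : ℕ => |f ((i : ℝ) * h) - U i|) hmem1
    rw [hS]
    rw [hcast] at this; exact this
  have hρb : |f b - U j| ≤ S := by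
    have := Finset.le_sup' (fun i : ℕ => |f ((i : ℝ) * h) - U i|) hmem2
    rw [hS]
    exact this
  have hkey2 : |f x - (f a * (b - x) + f b * (x - a)) / (b - a)| ≤ M2 / 2 * h * Δt := by
    refine key.trans ?_
    have hW : (x - a) * (b - x) = (h - Δt) * Δt := by rw [hx, ha, hb]; ring
    rw [hW]; nlinarith [mul_nonneg hM2nn (mul_pos hΔt hΔt).le]
  have hdecomp : f x - (U (j - 1) * (b - x) / h + U j * (x - a) / h)
      = (f x - (f a * (b - x) + f b * (x - a)) / (b - a))
        + ((f a - U (j - 1)) * ((b - x) / h) + (f b - U j) * ((x - a) / h)) := by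
    have hba' : b - a = h := by rw [ha, hb]; ring
    rw [hba']; field_simp; ring
  have h1 : 0 ≤ (b - x) / h := div_nonneg (by rw [hx]; linarith) hh.le
  have h2 : 0 ≤ (x - a) / h := div_nonneg (by linarith) hh.le
  have hBbound : |(f a - U (j - 1)) * ((b - x) / h) + (f b - U j) * ((x - a) / h)| ≤ S := by
    calc |(f a - U (j - 1)) * ((b - x) / h) + (f b - U j) * ((x - a) / h)|
        ≤ |(f a - U (j - 1)) * ((b - x) / h)| + |(f b - U j) * ((x - a) / h)| := abs_add_le _ _
      _ = |f a - U (j - 1)| * ((b - x) / h) + |f b - U j| * ((x - a) / h) := by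
          rw [abs_mul, abs_mul, abs_of_nonneg h1, abs_of_nonneg h2]
      _ ≤ S * ((b - x) / h) + S * ((x - a) / h) :=
          add_le_add (mul_le_mul_of_nonneg_right hρa h1) (mul_le_mul_of_nonneg_right hρb h2)
      _ = S := by
          have : (b - x) + (x - a) = h := by rw [hx, ha, hb]; ring
          field_simp
          linear_combination S * this
  calc |f x - (U (j - 1) * (b - x) / h + U j * (x - a) / h)|
      = |(f x - (f a * (b - x) + f b * (x - a)) / (b - a))
          + ((f a - U (j - 1)) * ((b - x) / h) + (f b - U j) * ((x - a) / h))| := by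
        rw [hdecomp]
    _ ≤ |f x - (f a * (b - x) + f b * (x - a)) / (b - a)|
        + |(f a - U (j - 1)) * ((b - x) / h) + (f b - U j) * ((x - a) / h)| := abs_add_le _ _
    _ ≤ M2 / 2 * h * Δt + S := add_le_add hkey2 hBbound
    _ = S + M2 / 2 * h * Δt := by ring
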